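/- Let S = (|S|, ≼, E) where |S| is a finite set, ≼ a partial ordering on |S|, and E a set of unordered pairs of distinct elements of |S|. Let c be the number of connected components of the Hasse diagram of the poset (|S|, ≼), and for each integer n ≥ 0 let C(S,n) be the number of maps φ : |S| → {1,…,n} that are isotone with respect to ≼ and satisfy φ(x) ≠ φ(y) whenever {x,y} ∈ E. Then there is a polynomial f with rational coefficients such that C(S,n) = f(n) for all n ≥ 0, and every prime dividing the denominator of any coefficient of f is at most card(|S|) − c + 1. -/

import Mathlib

open scoped Classical
open Polynomial

/-- The Hasse diagram of a poset `α`: the graph on `α` whose edges are the covering pairs. -/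
def hasseGraph (α : Type*) [PartialOrder α] : SimpleGraph α where
  Adj x y := x ⋖ y ∨ y ⋖ x
  symm := ⟨fun _ _ h => h.symm⟩
  loopless := ⟨fun x h => by
    rcases h with h | h <;> exact lt_irrefl x h.lt⟩

/-- `C(S,n)`: the number of maps `φ : |S| → {1,…,n}` that are isotone for `≼` and satisfy
`φ x ≠ φ y` whenever `{x,y} ∈ E` (the edge set of the graph `G`). -/
noncomputable def orderChromaticCount (α : Type*) [PartialOrder α] (G : SimpleGraph α)
    (n : ℕ) : ℕ :=
  Nat.card {φ : α → Fin n // Monotone φ ∧ ∀ x y : α, G.Adj x y → φ x ≠ φ y}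
open Polynomial

/-- All primes dividing the denominator of `q` are at most `B`. -/
def DenLE (B : ℕ) (q : ℚ) : Prop := ∀ p : ℕ, p.Prime → p ∣ q.den → p ≤ B

lemma DenLE.of_den_one {B : ℕ} {q : ℚ} (h : q.den = 1) : DenLE B q := by
  intro p hp hd; rw [h] at hd
  exact absurd (Nat.eq_one_of_dvd_one hd) hp.one_lt.ne'

lemma DenLE.zero {B : ℕ} : DenLE B 0 := DenLE.of_den_one rfl
lemma DenLE.one {B : ℕ} : DenLE B 1 := DenLE.of_den_one rfl
lemma DenLE.natCast {B : ℕ} (n : ℕ) : DenLE B (n : ℚ) := DenLE.of_den_one (Rat.den_natCast n)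

lemma DenLE.add {B : ℕ} {q r : ℚ} (hq : DenLE B q) (hr : DenLE B r) : DenLE B (q + r) := by
  intro p hp hd
  rcases (Nat.Prime.dvd_mul hp).mp (hd.trans (Rat.add_den_dvd q r)) with h | h
  · exact hq p hp h
  · exact hr p hp h

lemma DenLE.mul {B : ℕ} {q r : ℚ} (hq : DenLE B q) (hr : DenLE B r) : DenLE B (q * r) := by
  intro p hp hd
  rcases (Nat.Prime.dvd_mul hp).mp (hd.trans (Rat.mul_den_dvd q r)) with h | h
  · exact hq p hp h
  · exact hr p hp h

lemma DenLE.neg {B : ℕ} {q : ℚ} (hq : DenLE B q) : DenLE B (-q) := by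
  intro p hp hd; exact hq p hp (by rwa [Rat.neg_den] at hd)

lemma DenLE.sub {B : ℕ} {q r : ℚ} (hq : DenLE B q) (hr : DenLE B r) : DenLE B (q - r) := by
  rw [sub_eq_add_neg]; exact hq.add hr.neg

lemma DenLE.sum {B : ℕ} {ι : Type*} (s : Finset ι) (f : ι → ℚ) (h : ∀ i ∈ s, DenLE B (f i)) :
    DenLE B (∑ i ∈ s, f i) := by
  classical
  induction s using Finset.induction_on with
  | empty => simpa using DenLE.zero
  | insert _ _ hx ih =>
    rw [Finset.sum_insert hx]
    exact (h _ (Finset.mem_insert_self _ _)).add (ih fun i hi => h i (Finset.mem_insert_of_mem hi))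

lemma DenLE.mono {B B' : ℕ} {q : ℚ} (h : DenLE B q) (hB : B ≤ B') : DenLE B' q :=
  fun p hp hd => (h p hp hd).trans hB

/-- All primes dividing denominators of coefficients of `f` are at most `B`. -/
def PolyDenLE (B : ℕ) (f : ℚ[X]) : Prop := ∀ k, DenLE B (f.coeff k)

lemma PolyDenLE.zero {B : ℕ} : PolyDenLE B 0 := fun _ => by simpa using DenLE.zero
lemma PolyDenLE.one {B : ℕ} : PolyDenLE B 1 := fun k => by
  by_cases h : k = 0 <;> simp [coeff_one, h, DenLE.zero, DenLE.one]

lemma PolyDenLE.add {B : ℕ} {f g : ℚ[X]} (hf : PolyDenLE B f) (hg : PolyDenLE B g) :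
    PolyDenLE B (f + g) := fun k => by simpa [coeff_add] using (hf k).add (hg k)

lemma PolyDenLE.sub {B : ℕ} {f g : ℚ[X]} (hf : PolyDenLE B f) (hg : PolyDenLE B g) :
    PolyDenLE B (f - g) := fun k => by simpa [coeff_sub] using (hf k).sub (hg k)

lemma PolyDenLE.mul {B : ℕ} {f g : ℚ[X]} (hf : PolyDenLE B f) (hg : PolyDenLE B g) :
    PolyDenLE B (f * g) := fun k => by
  rw [coeff_mul]
  exact DenLE.sum _ _ fun p _ => (hf p.1).mul (hg p.2)

lemma PolyDenLE.natSmul {B : ℕ} {f : ℚ[X]} (n : ℕ) (hf : PolyDenLE B f) :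
    PolyDenLE B ((n : ℚ[X]) * f) := fun k => by
  rw [← Polynomial.C_eq_natCast, coeff_C_mul]
  exact (DenLE.natCast n).mul (hf k)

lemma PolyDenLE.sum {B : ℕ} {ι : Type*} (s : Finset ι) (f : ι → ℚ[X])
    (h : ∀ i ∈ s, PolyDenLE B (f i)) : PolyDenLE B (∑ i ∈ s, f i) := fun k => by
  rw [Polynomial.finset_sum_coeff]
  exact DenLE.sum _ _ fun i hi => h i hi k

lemma PolyDenLE.prod {B : ℕ} {ι : Type*} (s : Finset ι) (f : ι → ℚ[X])
    (h : ∀ i ∈ s, PolyDenLE B (f i)) : PolyDenLE B (∏ i ∈ s, f i) := by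
  classical
  induction s using Finset.induction_on with
  | empty => simpa using PolyDenLE.one
  | insert _ _ hx ih =>
    rw [Finset.prod_insert hx]
    exact (h _ (Finset.mem_insert_self _ _)).mul (ih fun i hi => h i (Finset.mem_insert_of_mem hi))

lemma PolyDenLE.mono {B B' : ℕ} {f : ℚ[X]} (h : PolyDenLE B f) (hB : B ≤ B') : PolyDenLE B' f :=
  fun k => (h k).mono hB

/-- The binomial coefficient polynomial `X choose m`. -/
noncomputable def binomPoly (m : ℕ) : ℚ[X] := C ((m.factorial : ℚ)⁻¹) * descPochhammer ℚ m

lemma binomPoly_eval (m n : ℕ) : (binomPoly m).eval (n : ℚ) = n.choose m := by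
  rw [binomPoly, eval_mul, eval_C, descPochhammer_eval_eq_descFactorial,
    Nat.descFactorial_eq_factorial_mul_choose]
  push_cast
  rw [← mul_assoc, inv_mul_cancel₀ (by exact_mod_cast m.factorial_ne_zero), one_mul]

lemma binomPoly_denLE (m : ℕ) : PolyDenLE m (binomPoly m) := by
  intro k p hp hd
  have hcoeff : (binomPoly m).coeff k
      = (((descPochhammer ℤ m).coeff k : ℚ)) / (m.factorial : ℚ) := by
    rw [binomPoly, coeff_C_mul, ← descPochhammer_map (Int.castRingHom ℚ) m, Polynomial.coeff_map]
    field_simp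
    simp
  rw [hcoeff] at hd
  have h2 : ((((descPochhammer ℤ m).coeff k : ℚ)) / (m.factorial : ℚ)).den ∣ m.factorial := by
    have := Rat.den_dvd ((descPochhammer ℤ m).coeff k) (m.factorial : ℤ)
    rw [Rat.divInt_eq_div] at this
    exact_mod_cast (by exact_mod_cast this :
      ((((descPochhammer ℤ m).coeff k : ℚ)) / ((m.factorial : ℤ) : ℚ)).den ∣ m.factorial)
  exact (Nat.Prime.dvd_factorial hp).mp (hd.trans h2)

lemma natcard_sigma {ι : Type*} [Fintype ι] (T : ι → Type*) [∀ i, Finite (T i)] :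
    Nat.card (Σ i, T i) = ∑ i, Nat.card (T i) := by
  have : ∀ i, Fintype (T i) := fun i => Fintype.ofFinite _
  simp [Nat.card_eq_fintype_card]

section Pattern
variable {β : Type*} [Fintype β]

lemma fiber_equiv (P : ∀ {n : ℕ}, (β → Fin n) → Prop)
    (hP : ∀ {m n : ℕ} (g : Fin m → Fin n), StrictMono g → ∀ φ, (P φ ↔ P (g ∘ φ)))
    {n : ℕ} (s : Finset (Fin n)) :
    Nat.card {φ : β → Fin n // P φ ∧ Finset.image φ Finset.univ = s}
      = Nat.card {ψ : β → Fin s.card // P ψ ∧ Function.Surjective ψ} := by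
  classical
  set iso := s.orderIsoOfFin rfl with hiso
  set g : Fin s.card → Fin n := fun k => (iso k).val with hg
  have hgs : StrictMono g := fun a b h => Subtype.coe_lt_coe.mpr (iso.strictMono h)
  have hmem : ∀ (φ : β → Fin n), Finset.image φ Finset.univ = s → ∀ b, φ b ∈ s := by
    intro φ him b
    have := Finset.mem_image_of_mem φ (Finset.mem_univ b)
    rwa [him] at this
  refine Nat.card_congr ?_
  refine
    { toFun := fun x => ⟨fun b => iso.symm ⟨x.1 b, hmem x.1 x.2.2 b⟩, ?_, ?_⟩
      invFun := fun y => ⟨g ∘ y.1, (hP g hgs y.1).mp y.2.1, ?_⟩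
      left_inv := ?_
      right_inv := ?_ }
  · -- P
    have hc : g ∘ (fun b => iso.symm ⟨x.1 b, hmem x.1 x.2.2 b⟩) = x.1 := by
      funext b; simp [hg]
    have := (hP g hgs (fun b => iso.symm ⟨x.1 b, hmem x.1 x.2.2 b⟩)).mpr
    apply this
    rw [hc]; exact x.2.1
  · -- surjective
    intro k
    have hmem2 : (iso k).val ∈ Finset.image x.1 Finset.univ := by
      rw [x.2.2]; exact (iso k).2
    obtain ⟨b, _, hb⟩ := Finset.mem_image.mp hmem2
    refine ⟨b, ?_⟩
    have h3 : (⟨x.1 b, hmem x.1 x.2.2 b⟩ : {a // a ∈ s}) = iso k := Subtype.ext hb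
    show iso.symm ⟨x.1 b, hmem x.1 x.2.2 b⟩ = k
    rw [h3, OrderIso.symm_apply_apply]
  · -- image = s
    ext z
    simp only [Finset.mem_image, Finset.mem_univ, true_and, Function.comp_apply]
    constructor
    · rintro ⟨b, rfl⟩; exact (iso (y.1 b)).2
    · intro hz
      obtain ⟨b, hb⟩ := y.2.2 (iso.symm ⟨z, hz⟩)
      refine ⟨b, ?_⟩
      rw [hb]
      simp [hg]
  · rintro ⟨φ, hφ, him⟩
    apply Subtype.ext
    funext b
    simp [hg]
  · rintro ⟨ψ, hψ, hsurj⟩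
    apply Subtype.ext
    funext b
    show iso.symm ⟨g (ψ b), _⟩ = ψ b
    have : (⟨g (ψ b), _⟩ : {a // a ∈ s}) = iso (ψ b) := Subtype.ext rfl
    rw [this, OrderIso.symm_apply_apply]

lemma pattern_count (P : ∀ {n : ℕ}, (β → Fin n) → Prop)
    (hP : ∀ {m n : ℕ} (g : Fin m → Fin n), StrictMono g → ∀ φ, (P φ ↔ P (g ∘ φ))) (n : ℕ) :
    Nat.card {φ : β → Fin n // P φ}
      = ∑ m ∈ Finset.range (Fintype.card β + 1),
          Nat.card {ψ : β → Fin m // P ψ ∧ Function.Surjective ψ} * n.choose m := by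
  classical
  set S : ℕ → ℕ := fun m => Nat.card {ψ : β → Fin m // P ψ ∧ Function.Surjective ψ} with hS
  have split : Nat.card {φ : β → Fin n // P φ} = ∑ s : Finset (Fin n), S s.card := by
    have e1 : {φ : β → Fin n // P φ}
        ≃ Σ s : Finset (Fin n), {x : {φ : β → Fin n // P φ} //
            Finset.image x.1 Finset.univ = s} :=
      (Equiv.sigmaFiberEquiv fun x : {φ : β → Fin n // P φ} =>
        Finset.image x.1 Finset.univ).symm
    rw [Nat.card_congr e1, natcard_sigma]
    refine Finset.sum_congr rfl fun s _ => ?_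
    exact (Nat.card_congr (Equiv.subtypeSubtypeEquivSubtypeInter (fun φ : β → Fin n => P φ)
      (fun φ => Finset.image φ Finset.univ = s))).trans
      (fiber_equiv P (fun g hg φ => hP g hg φ) s)
  rw [split]
  have hle : ∀ s : Finset (Fin n), s.card ∈ Finset.range (n+1) := fun s =>
    Finset.mem_range.mpr (Nat.lt_succ_of_le (by simpa using Finset.card_le_univ s))
  have key := Finset.sum_fiberwise_eq_sum_filter (Finset.univ : Finset (Finset (Fin n)))
    (Finset.range (n+1)) (fun s => s.card) (fun s => S s.card)
  rw [Finset.filter_true_of_mem (fun s _ => hle s)] at key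
  rw [← key]
  have inner : ∀ m ∈ Finset.range (n+1),
      ∑ s ∈ Finset.filter (fun s : Finset (Fin n) => s.card = m) Finset.univ, S s.card
        = n.choose m * S m := by
    intro m _
    rw [Finset.sum_congr rfl (fun s hs => by rw [(Finset.mem_filter.mp hs).2]),
      Finset.sum_const, smul_eq_mul]
    congr 1
    have : Finset.filter (fun s : Finset (Fin n) => s.card = m) Finset.univ
        = Finset.powersetCard m Finset.univ := by
      rw [Finset.powersetCard_eq_filter, Finset.powerset_univ]
    rw [this, Finset.card_powersetCard, Finset.card_fin]
  rw [Finset.sum_congr rfl inner]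
  have hSzero : ∀ m, Fintype.card β < m → S m = 0 := by
    intro m hm
    have : IsEmpty {ψ : β → Fin m // P ψ ∧ Function.Surjective ψ} := by
      constructor; rintro ⟨ψ, -, hsurj⟩
      exact absurd (Fintype.card_le_of_surjective ψ hsurj) (by simpa using hm)
    exact Nat.card_of_isEmpty
  set N := max n (Fintype.card β) with hN
  have e2 : ∑ m ∈ Finset.range (n+1), n.choose m * S m
      = ∑ m ∈ Finset.range (N+1), n.choose m * S m := by
    refine Finset.sum_subset (by
      intro x hx; simp only [Finset.mem_range] at *; omega) fun x _ hx => ?_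
    simp only [Finset.mem_range, not_lt] at hx
    rw [Nat.choose_eq_zero_of_lt (by omega), zero_mul]
  have e3 : ∑ m ∈ Finset.range (Fintype.card β + 1), S m * n.choose m
      = ∑ m ∈ Finset.range (N+1), n.choose m * S m := by
    rw [Finset.sum_congr rfl fun m _ => mul_comm (S m) (n.choose m)]
    refine Finset.sum_subset (by
      intro x hx; simp only [Finset.mem_range] at *; omega) fun x _ hx => ?_
    simp only [Finset.mem_range, not_lt] at hx
    rw [hSzero x (by omega), mul_zero]
  rw [e2, ← e3]
end Pattern

section Core
variable {α : Type*}

def cRel (r : α → α → Prop) : α → α → Prop := fun x y => r x y ∨ r y x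
def connRel (r : α → α → Prop) : α → α → Prop := Relation.EqvGen (cRel r)
def eqRel (r : α → α → Prop) : α → α → Prop := fun x y => r x y ∧ r y x

noncomputable def qq (r : α → α → Prop) : ℕ := Nat.card (Quot (eqRel r))
noncomputable def cc (r : α → α → Prop) : ℕ := Nat.card (Quot (connRel r))

noncomputable def cnt (r E : α → α → Prop) (n : ℕ) : ℕ :=
  Nat.card {φ : α → Fin n // (∀ x y, r x y → φ x ≤ φ y) ∧ (∀ x y, E x y → φ x ≠ φ y)}

lemma eqRel_equivalence {r : α → α → Prop} (hrefl : Reflexive r) (htrans : Transitive r) :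
    Equivalence (eqRel r) :=
  ⟨fun x => ⟨hrefl x, hrefl x⟩, fun h => ⟨h.2, h.1⟩,
    fun h1 h2 => ⟨htrans h1.1 h2.1, htrans h2.2 h1.2⟩⟩

lemma connRel_equivalence (r : α → α → Prop) : Equivalence (connRel r) :=
  Relation.EqvGen.is_equivalence _

lemma connRel_of_rel {r : α → α → Prop} {x y : α} (h : r x y) : connRel r x y :=
  Relation.EqvGen.rel _ _ (Or.inl h)

lemma eqRel_le_connRel (r : α → α → Prop) {x y : α} (h : eqRel r x y) : connRel r x y :=
  connRel_of_rel h.1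

/-- the projection from order-equivalence classes to connected components -/
noncomputable def projQ (r : α → α → Prop) : Quot (eqRel r) → Quot (connRel r) :=
  Quot.map id (fun _ _ h => eqRel_le_connRel r h)

lemma projQ_mk (r : α → α → Prop) (a : α) :
    projQ r (Quot.mk _ a) = Quot.mk _ a := rfl

lemma projQ_surjective (r : α → α → Prop) : Function.Surjective (projQ r) := by
  intro t
  induction t using Quot.ind with
  | _ a => exact ⟨Quot.mk _ a, rfl⟩

/-- Key component-size bound: the number of `eqRel`-classes inside a single connected
component is at most `qq r - cc r + 1`. -/
lemma classes_in_component_le [Fintype α] {r : α → α → Prop}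
    (hrefl : Reflexive r) (htrans : Transitive r) (i : Quot (connRel r)) :
    Nat.card (Quot (fun u v : {a : α // Quot.mk (connRel r) a = i} => eqRel r u.1 v.1))
      ≤ qq r - cc r + 1 := by
  -- injection into the fiber of projQ over i
  have h1 : Nat.card (Quot (fun u v : {a : α // Quot.mk (connRel r) a = i} => eqRel r u.1 v.1))
      ≤ Nat.card {z : Quot (eqRel r) // projQ r z = i} := by
    have hwd : ∀ u v : {a : α // Quot.mk (connRel r) a = i}, eqRel r u.1 v.1 →
        (⟨Quot.mk (eqRel r) u.1, u.2⟩ : {z : Quot (eqRel r) // projQ r z = i})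
          = ⟨Quot.mk (eqRel r) v.1, v.2⟩ := fun u v h => Subtype.ext (Quot.sound h)
    refine Nat.card_le_card_of_injective
      (Quot.lift (fun u : {a : α // Quot.mk (connRel r) a = i} =>
        (⟨Quot.mk (eqRel r) u.1, u.2⟩ :
        {z : Quot (eqRel r) // projQ r z = i})) hwd) ?_
    intro a b
    induction a using Quot.ind with
    | _ u =>
      induction b using Quot.ind with
      | _ v =>
        intro h
        have h2 : Quot.mk (eqRel r) u.1 = Quot.mk (eqRel r) v.1 := congrArg Subtype.val h
        have h3 : eqRel r u.1 v.1 :=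
          ((eqRel_equivalence hrefl htrans).eqvGen_iff).mp (Quot.eq.mp h2)
        exact Quot.sound h3
  -- injection from other components into the complement
  have h2 : cc r - 1 ≤ Nat.card {z : Quot (eqRel r) // projQ r z ≠ i} := by
    have hinj : Function.Injective
        (fun t : {t : Quot (connRel r) // t ≠ i} => (⟨Quot.mk (eqRel r) t.1.out, by
          show projQ r _ ≠ i
          rw [projQ_mk, Quot.out_eq]
          exact t.2⟩ : {z : Quot (eqRel r) // projQ r z ≠ i})) := by
      intro t1 t2 h
      have := congrArg (fun z : {z : Quot (eqRel r) // projQ r z ≠ i} => projQ r z.1) h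
      simp only [projQ_mk, Quot.out_eq] at this
      exact Subtype.ext this
    have hle := Nat.card_le_card_of_injective _ hinj
    have hfin : Fintype (Quot (connRel r)) := Fintype.ofFinite _
    have hcard : Nat.card {t : Quot (connRel r) // t ≠ i} = cc r - 1 := by
      rw [Nat.card_eq_fintype_card, Fintype.card_subtype_compl, Fintype.card_subtype_eq,
        cc, Nat.card_eq_fintype_card]
    omega
  -- totals
  have h3 : Nat.card {z : Quot (eqRel r) // projQ r z = i}
      + Nat.card {z : Quot (eqRel r) // projQ r z ≠ i} = qq r := by
    have hfin : Fintype (Quot (eqRel r)) := Fintype.ofFinite _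
    rw [qq, Nat.card_eq_fintype_card, Nat.card_eq_fintype_card, Nat.card_eq_fintype_card,
      Fintype.card_subtype_compl]
    have := Fintype.card_subtype_le (fun z : Quot (eqRel r) => projQ r z = i)
    omega
  have h4 : 0 < cc r := @Nat.card_pos _ ⟨i⟩ _
  omega
end Core

section BaseCase
variable {α : Type*}

/-- Decomposition of constraint-respecting maps along fibers of `g`, when all constraints
live inside single fibers. -/
def piDecompEquiv {κ : Type*} (g : α → κ) (s t : α → α → Prop)
    (hs : ∀ x y, s x y → g x = g y) (ht : ∀ x y, t x y → g x = g y) (n : ℕ) :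
    {φ : α → Fin n // (∀ x y, s x y → φ x ≤ φ y) ∧ (∀ x y, t x y → φ x < φ y)}
      ≃ ∀ i : κ, {ψ : {a : α // g a = i} → Fin n //
          ∀ u v : {a : α // g a = i}, (s u.1 v.1 → ψ u ≤ ψ v) ∧ (t u.1 v.1 → ψ u < ψ v)} where
  toFun φ i := ⟨fun a => φ.1 a.1, fun u v => ⟨fun h => φ.2.1 _ _ h, fun h => φ.2.2 _ _ h⟩⟩
  invFun F := by
    have key : ∀ (x : α) (i : κ) (hxy : g x = i),
        (F (g x)).1 ⟨x, rfl⟩ = (F i).1 ⟨x, hxy⟩ := by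
      intro x i hxy; cases hxy; rfl
    refine ⟨fun a => (F (g a)).1 ⟨a, rfl⟩, fun x y h => ?_, fun x y h => ?_⟩
    · have hg := hs x y h
      show (F (g x)).1 ⟨x, rfl⟩ ≤ (F (g y)).1 ⟨y, rfl⟩
      rw [key x (g y) hg]
      exact ((F (g y)).2 ⟨x, hg⟩ ⟨y, rfl⟩).1 h
    · have hg := ht x y h
      show (F (g x)).1 ⟨x, rfl⟩ < (F (g y)).1 ⟨y, rfl⟩
      rw [key x (g y) hg]
      exact ((F (g y)).2 ⟨x, hg⟩ ⟨y, rfl⟩).2 h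
  left_inv φ := Subtype.ext rfl
  right_inv F := by
    funext i
    apply Subtype.ext
    funext a
    obtain ⟨av, hv⟩ := a
    cases hv
    rfl

lemma polyDenLE_C_nat {B : ℕ} (n : ℕ) : PolyDenLE B (C (n : ℚ)) := by
  intro k
  rcases eq_or_ne k 0 with rfl | hk
  · rw [coeff_C_zero]; exact DenLE.natCast n
  · rw [coeff_C, if_neg hk]; exact DenLE.zero

lemma base_case [Fintype α] {r E : α → α → Prop} (hrefl : Reflexive r) (htrans : Transitive r)
    (hE : Symmetric E) (hcomp : ∀ x y, E x y → r x y ∨ r y x) :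
    ∃ f : ℚ[X], (∀ n : ℕ, (cnt r E n : ℚ) = f.eval (n : ℚ))
      ∧ PolyDenLE (qq r - cc r + 1) f := by
  by_cases hbad : ∃ x y, E x y ∧ r x y ∧ r y x
  · obtain ⟨x, y, hExy, hxy, hyx⟩ := hbad
    refine ⟨0, fun n => ?_, PolyDenLE.zero⟩
    have : IsEmpty {φ : α → Fin n // (∀ x y, r x y → φ x ≤ φ y)
        ∧ (∀ x y, E x y → φ x ≠ φ y)} :=
      ⟨fun φ => φ.2.2 x y hExy (le_antisymm (φ.2.1 x y hxy) (φ.2.1 y x hyx))⟩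
    rw [cnt, Nat.card_of_isEmpty]
    simp
  -- every edge is strictly comparable (in at least one direction)
  have hs : ∀ x y, r x y → Quot.mk (connRel r) x = Quot.mk (connRel r) y := fun x y h => Quot.sound (connRel_of_rel h)
  have ht : ∀ x y, (E x y ∧ r x y) → Quot.mk (connRel r) x = Quot.mk (connRel r) y := fun x y h => hs x y h.2
  -- rewrite the count using strict constraints
  have hiff : ∀ n (φ : α → Fin n),
      ((∀ x y, r x y → φ x ≤ φ y) ∧ (∀ x y, E x y → φ x ≠ φ y))
        ↔ ((∀ x y, r x y → φ x ≤ φ y) ∧ (∀ x y, (E x y ∧ r x y) → φ x < φ y)) := by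
    intro n φ
    constructor
    · rintro ⟨h1, h2⟩
      exact ⟨h1, fun x y ⟨he, hr⟩ => lt_of_le_of_ne (h1 x y hr) (h2 x y he)⟩
    · rintro ⟨h1, h2⟩
      refine ⟨h1, fun x y he => ?_⟩
      rcases hcomp x y he with hr | hr
      · exact ne_of_lt (h2 x y ⟨he, hr⟩)
      · exact (ne_of_lt (h2 y x ⟨hE he, hr⟩)).symm
  -- per-component data
  have hfinι : Fintype (Quot (connRel r)) := Fintype.ofFinite _
  have hfinF : ∀ i : Quot (connRel r), Fintype ({a : α // Quot.mk (connRel r) a = i}) := fun i => Fintype.ofFinite _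
  set Q : ∀ i, ∀ {n : ℕ}, ({a : α // Quot.mk (connRel r) a = i} → Fin n) → Prop := fun i {n} ψ =>
    ∀ u v : {a : α // Quot.mk (connRel r) a = i}, (r u.1 v.1 → ψ u ≤ ψ v) ∧ ((E u.1 v.1 ∧ r u.1 v.1) → ψ u < ψ v) with hQ
  have hQinv : ∀ i, ∀ {m n : ℕ} (gm : Fin m → Fin n), StrictMono gm →
      ∀ ψ, (Q i ψ ↔ Q i (gm ∘ ψ)) := by
    intro i m n gm hgm ψ
    constructor
    · intro h u v
      exact ⟨fun hr => hgm.le_iff_le.mpr ((h u v).1 hr),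
        fun hr => hgm ((h u v).2 hr)⟩
    · intro h u v
      exact ⟨fun hr => hgm.le_iff_le.mp ((h u v).1 hr),
        fun hr => hgm.lt_iff_lt.mp ((h u v).2 hr)⟩
  set S : ∀ (i : Quot (connRel r)), ℕ → ℕ := fun i m =>
    Nat.card {ψ : {a : α // Quot.mk (connRel r) a = i} → Fin m // Q i ψ ∧ Function.Surjective ψ} with hSdef
  -- the count as a product of per-component sums
  have hcount : ∀ n : ℕ, cnt r E n
      = ∏ i : Quot (connRel r), ∑ m ∈ Finset.range (Fintype.card ({a : α // Quot.mk (connRel r) a = i}) + 1),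
          S i m * n.choose m := by
    intro n
    rw [cnt]
    rw [Nat.card_congr (Equiv.subtypeEquivRight (hiff n))]
    rw [Nat.card_congr (piDecompEquiv (Quot.mk (connRel r)) r (fun u v => E u v ∧ r u v) hs ht n)]
    rw [Nat.card_pi]
    refine Finset.prod_congr rfl fun i _ => ?_
    exact pattern_count (Q i) (fun gm hgm ψ => hQinv i gm hgm ψ) n
  -- vanishing of surjective counts beyond the number of classes in the component
  have hS0 : ∀ i m,
      Nat.card (Quot (fun u v : {a : α // Quot.mk (connRel r) a = i} => eqRel r u.1 v.1)) < m
      → S i m = 0 := by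
    intro i m hm
    have : IsEmpty {ψ : {a : α // Quot.mk (connRel r) a = i} → Fin m // Q i ψ ∧ Function.Surjective ψ} := by
      constructor
      rintro ⟨ψ, hψ, hsurj⟩
      have hwd : ∀ u v : {a : α // Quot.mk (connRel r) a = i}, eqRel r u.1 v.1 → ψ u = ψ v := fun u v h =>
        le_antisymm ((hψ u v).1 h.1) ((hψ v u).1 h.2)
      have hbar := Nat.card_le_card_of_surjective
        (Quot.lift ψ hwd) (fun k => by
          obtain ⟨b, hb⟩ := hsurj k
          exact ⟨Quot.mk _ b, hb⟩)
      rw [Nat.card_eq_fintype_card (α := Fin m), Fintype.card_fin] at hbar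
      omega
    rw [hSdef]
    exact Nat.card_of_isEmpty
  -- assemble the polynomial
  refine ⟨∏ i : Quot (connRel r), ∑ m ∈ Finset.range (Fintype.card ({a : α // Quot.mk (connRel r) a = i}) + 1),
      C ((S i m : ℚ)) * binomPoly m, fun n => ?_, ?_⟩
  · rw [hcount n]
    push_cast
    rw [eval_prod]
    refine Finset.prod_congr rfl fun i _ => ?_
    rw [eval_finset_sum]
    push_cast
    refine Finset.sum_congr rfl fun m _ => ?_
    rw [eval_mul, eval_C, binomPoly_eval]
  · refine PolyDenLE.prod _ _ fun i _ => PolyDenLE.sum _ _ fun m hm => ?_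
    rcases eq_or_ne (S i m) 0 with h0 | h0
    · rw [h0]
      push_cast
      rw [map_zero, zero_mul]
      exact PolyDenLE.zero
    · have hle : m ≤ Nat.card (Quot (fun u v : {a : α // Quot.mk (connRel r) a = i} =>
          eqRel r u.1 v.1)) := by
        by_contra hlt
        exact h0 (hS0 i m (by omega))
      have := classes_in_component_le hrefl htrans i
      exact (polyDenLE_C_nat _).mul ((binomPoly_denLE m).mono (by omega))

end BaseCase

section DelContr
variable {α : Type*}

/-- splitting a subtype count along a further condition -/
lemma natcard_split {γ : Type*} [Finite γ] (P Q : γ → Prop) :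
    Nat.card {x // P x} = Nat.card {x // P x ∧ Q x} + Nat.card {x // P x ∧ ¬ Q x} := by
  rw [← Nat.card_sum]
  refine Nat.card_congr ?_
  exact ((Equiv.sumCompl (fun x : {x // P x} => Q x.1)).symm.trans
    (Equiv.sumCongr (Equiv.subtypeSubtypeEquivSubtypeInter P Q)
      (Equiv.subtypeSubtypeEquivSubtypeInter P (fun x => ¬ Q x))))

variable (r : α → α → Prop) (x y : α)

/-- contracted relation -/
def ctr : α → α → Prop :=
  Relation.TransGen (fun u v => r u v ∨ (u = x ∧ v = y) ∨ (u = y ∧ v = x))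

lemma ctr_refl (hrefl : Reflexive r) : Reflexive (ctr r x y) :=
  fun a => Relation.TransGen.single (Or.inl (hrefl a))

lemma ctr_trans : Transitive (ctr r x y) := fun _ _ _ h1 h2 => h1.trans h2

lemma le_ctr {u v : α} (h : r u v) : ctr r x y u v := Relation.TransGen.single (Or.inl h)

lemma ctr_xy : ctr r x y x y := Relation.TransGen.single (Or.inr (Or.inl ⟨rfl, rfl⟩))
lemma ctr_yx : ctr r x y y x := Relation.TransGen.single (Or.inr (Or.inr ⟨rfl, rfl⟩))

/-- monotonicity for the contracted relation -/
lemma ctr_mono_iff {n : ℕ} (φ : α → Fin n) :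
    (∀ u v, ctr r x y u v → φ u ≤ φ v)
      ↔ ((∀ u v, r u v → φ u ≤ φ v) ∧ φ x = φ y) := by
  constructor
  · intro h
    exact ⟨fun u v hr => h u v (le_ctr r x y hr),
      le_antisymm (h x y (ctr_xy r x y)) (h y x (ctr_yx r x y))⟩
  · rintro ⟨hm, hxy⟩ u v h
    induction h with
    | single h =>
      rcases h with h | ⟨rfl, rfl⟩ | ⟨rfl, rfl⟩
      · exact hm _ _ h
      · exact le_of_eq hxy
      · exact le_of_eq hxy.symm
    | tail _ h2 ih =>
      refine le_trans ih ?_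
      rcases h2 with h | ⟨rfl, rfl⟩ | ⟨rfl, rfl⟩
      · exact hm _ _ h
      · exact le_of_eq hxy
      · exact le_of_eq hxy.symm

variable {r x y}

lemma ctr_qq_lt [Fintype α] (hrefl : Reflexive r) (htrans : Transitive r)
    (hx : ¬ r x y) : qq (ctr r x y) < qq r := by
  have hfin1 : Fintype (Quot (eqRel r)) := Fintype.ofFinite _
  have hfin2 : Fintype (Quot (eqRel (ctr r x y))) := Fintype.ofFinite _
  rw [qq, qq, Nat.card_eq_fintype_card, Nat.card_eq_fintype_card]
  set F : Quot (eqRel r) → Quot (eqRel (ctr r x y)) :=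
    Quot.map id (fun u v h => ⟨le_ctr r x y h.1, le_ctr r x y h.2⟩) with hF
  have hsurj : Function.Surjective F := by
    intro t; induction t using Quot.ind with
    | _ a => exact ⟨Quot.mk _ a, rfl⟩
  have hninj : ¬ Function.Injective F := by
    intro hinj
    have h1 : F (Quot.mk _ x) = F (Quot.mk _ y) :=
      Quot.sound ⟨ctr_xy r x y, ctr_yx r x y⟩
    have h2 := hinj h1
    have h3 : eqRel r x y :=
      ((eqRel_equivalence hrefl htrans).eqvGen_iff).mp (Quot.eq.mp h2)
    exact hx h3.1
  exact Fintype.card_lt_of_surjective_not_injective F hsurj hninj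

lemma ctr_cc_ge [Fintype α] (hrefl : Reflexive r) : cc r ≤ cc (ctr r x y) + 1 := by
  -- T relation
  set T : α → α → Prop := fun u v => connRel r u v ∨
    ((connRel r u x ∨ connRel r u y) ∧ (connRel r v x ∨ connRel r v y)) with hT
  have hconn := Relation.EqvGen.is_equivalence (cRel r)
  have Trefl : ∀ a, T a a := fun a => Or.inl (hconn.refl a)
  have Tsymm : ∀ {a b}, T a b → T b a := by
    rintro a b (h | ⟨h1, h2⟩)
    · exact Or.inl (hconn.symm h)
    · exact Or.inr ⟨h2, h1⟩
  have Ttrans : ∀ {a b c}, T a b → T b c → T a c := by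
    rintro a b c (h | ⟨h1, h2⟩) (h' | ⟨h1', h2'⟩)
    · exact Or.inl (hconn.trans h h')
    · refine Or.inr ⟨?_, h2'⟩
      rcases h1' with h1' | h1'
      · exact Or.inl (hconn.trans h h1')
      · exact Or.inr (hconn.trans h h1')
    · refine Or.inr ⟨h1, ?_⟩
      rcases h2 with h2 | h2
      · exact Or.inl (hconn.trans (hconn.symm h') h2)
      · exact Or.inr (hconn.trans (hconn.symm h') h2)
    · exact Or.inr ⟨h1, h2'⟩
  -- single steps of the contracted relation land in T
  have hstep : ∀ u v, ctr r x y u v → T u v := by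
    intro u v h
    induction h with
    | single h =>
      rcases h with h | ⟨rfl, rfl⟩ | ⟨rfl, rfl⟩
      · exact Or.inl (Relation.EqvGen.rel _ _ (Or.inl h))
      · exact Or.inr ⟨Or.inl (hconn.refl _), Or.inr (hconn.refl _)⟩
      · exact Or.inr ⟨Or.inr (hconn.refl _), Or.inl (hconn.refl _)⟩
    | tail _ h2 ih =>
      refine Ttrans ih ?_
      rcases h2 with h | ⟨rfl, rfl⟩ | ⟨rfl, rfl⟩
      · exact Or.inl (Relation.EqvGen.rel _ _ (Or.inl h))
      · exact Or.inr ⟨Or.inl (hconn.refl _), Or.inr (hconn.refl _)⟩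
      · exact Or.inr ⟨Or.inr (hconn.refl _), Or.inl (hconn.refl _)⟩
  have hT' : ∀ u v, connRel (ctr r x y) u v → T u v := by
    intro u v h
    induction h with
    | rel a b hab =>
      rcases hab with hab | hab
      · exact hstep a b hab
      · exact Tsymm (hstep b a hab)
    | refl a => exact Trefl a
    | symm a b _ ih => exact Tsymm ih
    | trans a b c _ _ ih1 ih2 => exact Ttrans ih1 ih2
  -- injection off the class of y
  set G : Quot (connRel r) → Quot (connRel (ctr r x y)) :=
    Quot.map id (fun u v h =>
      Relation.EqvGen.mono (fun a b hab => by
        rcases hab with hab | hab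
        · exact Or.inl (le_ctr r x y hab)
        · exact Or.inr (le_ctr r x y hab)) _ _ h) with hG
  have hinj' : ∀ u v : α, G (Quot.mk _ u) = G (Quot.mk _ v) →
      Quot.mk (connRel r) u ≠ Quot.mk (connRel r) y →
      Quot.mk (connRel r) v ≠ Quot.mk (connRel r) y →
      Quot.mk (connRel r) u = Quot.mk (connRel r) v := by
    intro u v h hu hv
    have hc : connRel (ctr r x y) u v :=
      ((Relation.EqvGen.is_equivalence _).eqvGen_iff).mp (Quot.eq.mp h)
    rcases hT' u v hc with h' | ⟨h1, h2⟩
    · exact Quot.sound h'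
    · rcases h1 with h1 | h1
      · rcases h2 with h2 | h2
        · exact Quot.sound (hconn.trans h1 (hconn.symm h2))
        · exact absurd (Quot.sound h2) hv
      · exact absurd (Quot.sound h1) hu
  have hinj : Function.Injective
      (fun t : {t : Quot (connRel r) // t ≠ Quot.mk (connRel r) y} => G t.1) := by
    rintro ⟨t1, h1⟩ ⟨t2, h2⟩ h
    induction t1 using Quot.ind with
    | _ u =>
      induction t2 using Quot.ind with
      | _ v =>
        simp only at h
        exact Subtype.ext (hinj' u v h h1 h2)
  have hle := Nat.card_le_card_of_injective _ hinj
  have hfin : Fintype (Quot (connRel r)) := Fintype.ofFinite _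
  have hcard : Nat.card {t : Quot (connRel r) // t ≠ Quot.mk (connRel r) y}
      = Nat.card (Quot (connRel r)) - 1 := by
    rw [Nat.card_eq_fintype_card, Fintype.card_subtype_compl, Fintype.card_subtype_eq,
      Nat.card_eq_fintype_card]
  have hpos : 0 < Nat.card (Quot (connRel r)) := @Nat.card_pos _ ⟨Quot.mk _ y⟩ _
  rw [hcard] at hle
  show Nat.card (Quot (connRel r)) ≤ Nat.card (Quot (connRel (ctr r x y))) + 1
  omega
end DelContr

section Count
variable {α : Type*}

lemma del_contr_count [Fintype α] (r E : α → α → Prop) (x y : α) (hE : Symmetric E)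
    (hxy : E x y) (n : ℕ) :
    cnt r E n + cnt (ctr r x y) (fun u v => E u v ∧ ¬((u = x ∧ v = y) ∨ (u = y ∧ v = x))) n
      = cnt r (fun u v => E u v ∧ ¬((u = x ∧ v = y) ∨ (u = y ∧ v = x))) n := by
  set E' : α → α → Prop := fun u v => E u v ∧ ¬((u = x ∧ v = y) ∨ (u = y ∧ v = x)) with hE'
  have key := natcard_split (fun φ : α → Fin n =>
    (∀ u v, r u v → φ u ≤ φ v) ∧ (∀ u v, E' u v → φ u ≠ φ v)) (fun φ => φ x ≠ φ y)
  have iff1 : ∀ φ : α → Fin n,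
      ((∀ u v, r u v → φ u ≤ φ v) ∧ (∀ u v, E u v → φ u ≠ φ v))
        ↔ (((∀ u v, r u v → φ u ≤ φ v) ∧ (∀ u v, E' u v → φ u ≠ φ v)) ∧ φ x ≠ φ y) := by
    intro φ
    constructor
    · rintro ⟨h1, h2⟩
      exact ⟨⟨h1, fun u v h => h2 u v h.1⟩, h2 x y hxy⟩
    · rintro ⟨⟨h1, h2⟩, hQ⟩
      refine ⟨h1, fun u v hEuv => ?_⟩
      by_cases hc : (u = x ∧ v = y) ∨ (u = y ∧ v = x)
      · rcases hc with ⟨rfl, rfl⟩ | ⟨rfl, rfl⟩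
        · exact hQ
        · exact hQ.symm
      · exact h2 u v ⟨hEuv, hc⟩
  have iff2 : ∀ φ : α → Fin n,
      ((∀ u v, ctr r x y u v → φ u ≤ φ v) ∧ (∀ u v, E' u v → φ u ≠ φ v))
        ↔ (((∀ u v, r u v → φ u ≤ φ v) ∧ (∀ u v, E' u v → φ u ≠ φ v)) ∧ ¬ (φ x ≠ φ y)) := by
    intro φ
    rw [ctr_mono_iff, not_ne_iff]
    tauto
  rw [cnt, cnt, cnt,
    Nat.card_congr (Equiv.subtypeEquivRight iff1),
    Nat.card_congr (Equiv.subtypeEquivRight iff2), key]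

end Count


section Main
variable {α : Type*}

lemma main_aux [Fintype α] : ∀ (k : ℕ) (r E : α → α → Prop), Reflexive r → Transitive r →
    Symmetric E → Set.ncard {p : α × α | E p.1 p.2 ∧ ¬ r p.1 p.2 ∧ ¬ r p.2 p.1} ≤ k →
    ∃ f : ℚ[X], (∀ n : ℕ, (cnt r E n : ℚ) = f.eval (n : ℚ))
      ∧ PolyDenLE (qq r - cc r + 1) f := by
  intro k
  induction k with
  | zero =>
    intro r E h1 h2 h3 hm
    refine base_case h1 h2 h3 ?_
    intro u v hEuv
    by_contra hc
    push_neg at hc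
    have hmem : (u, v) ∈ {p : α × α | E p.1 p.2 ∧ ¬ r p.1 p.2 ∧ ¬ r p.2 p.1} :=
      ⟨hEuv, hc.1, hc.2⟩
    have hpos := (Set.ncard_pos (Set.toFinite _)).mpr ⟨(u, v), hmem⟩
    omega
  | succ k ih =>
    intro r E h1 h2 h3 hm
    by_cases hbad : ∃ a b, E a b ∧ ¬ r a b ∧ ¬ r b a
    · obtain ⟨x, y, hExy, hx, hy⟩ := hbad
      set E' : α → α → Prop :=
        fun u v => E u v ∧ ¬((u = x ∧ v = y) ∨ (u = y ∧ v = x)) with hE'def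
      have hE'sym : Symmetric E' := by
        rintro u v ⟨h, hc⟩
        exact ⟨h3 h, fun hc' => hc (by tauto)⟩
      have hm1 : Set.ncard {p : α × α | E' p.1 p.2 ∧ ¬ r p.1 p.2 ∧ ¬ r p.2 p.1} ≤ k := by
        have hss : {p : α × α | E' p.1 p.2 ∧ ¬ r p.1 p.2 ∧ ¬ r p.2 p.1}
            ⊂ {p : α × α | E p.1 p.2 ∧ ¬ r p.1 p.2 ∧ ¬ r p.2 p.1} := by
          refine (Set.ssubset_iff_of_subset ?_).mpr ?_
          · intro p hp
            simp only [Set.mem_setOf_eq] at hp ⊢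
            exact ⟨hp.1.1, hp.2⟩
          · refine ⟨(x, y), ?_, ?_⟩
            · simp only [Set.mem_setOf_eq]
              exact ⟨hExy, hx, hy⟩
            · simp only [Set.mem_setOf_eq]
              intro hc
              exact hc.1.2 (Or.inl ⟨rfl, rfl⟩)
        have := Set.ncard_lt_ncard hss (Set.toFinite _)
        omega
      have hm2 : Set.ncard {p : α × α | E' p.1 p.2
          ∧ ¬ ctr r x y p.1 p.2 ∧ ¬ ctr r x y p.2 p.1} ≤ k := by
        have hsub : {p : α × α | E' p.1 p.2 ∧ ¬ ctr r x y p.1 p.2 ∧ ¬ ctr r x y p.2 p.1}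
            ⊆ {p : α × α | E' p.1 p.2 ∧ ¬ r p.1 p.2 ∧ ¬ r p.2 p.1} := by
          rintro p ⟨hp1, hp2, hp3⟩
          exact ⟨hp1, fun hr => hp2 (le_ctr r x y hr), fun hr => hp3 (le_ctr r x y hr)⟩
        have := Set.ncard_le_ncard hsub (Set.toFinite _)
        omega
      obtain ⟨f1, hf1, hd1⟩ := ih r E' h1 h2 hE'sym hm1
      obtain ⟨f2, hf2, hd2⟩ := ih (ctr r x y) E' (ctr_refl r x y h1) (ctr_trans r x y)
        hE'sym hm2
      refine ⟨f1 - f2, fun n => ?_, ?_⟩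
      · have hkey := del_contr_count r E x y h3 hExy n
        have hcast : (cnt r E n : ℚ) + (cnt (ctr r x y) E' n : ℚ) = (cnt r E' n : ℚ) := by
          exact_mod_cast congrArg (Nat.cast : ℕ → ℚ) hkey
        rw [Polynomial.eval_sub, ← hf1 n, ← hf2 n]
        linarith
      · refine PolyDenLE.sub hd1 (hd2.mono ?_)
        have hq := ctr_qq_lt h1 h2 hx
        have hc := ctr_cc_ge (r := r) (x := x) (y := y) h1
        have hcq : cc (ctr r x y) ≤ qq (ctr r x y) :=
          Nat.card_le_card_of_surjective _ (projQ_surjective _)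
        omega
    · push_neg at hbad
      refine base_case h1 h2 h3 (fun u v h => ?_)
      by_cases hr : r u v
      · exact Or.inl hr
      · exact Or.inr (hbad u v h hr)

end Main

section Final
variable {α : Type*} [Fintype α] [PartialOrder α]

lemma hasse_reachable_of_le {x y : α} (h : x ≤ y) : (hasseGraph α).Reachable x y := by
  suffices H : ∀ (N : ℕ) (x y : α), Set.ncard (Set.Icc x y) ≤ N → x ≤ y →
      (hasseGraph α).Reachable x y from H (Set.ncard (Set.Icc x y)) x y le_rfl h
  intro N
  induction N with
  | zero =>
    intro x y hN hle
    have hmem : x ∈ Set.Icc x y := ⟨le_rfl, hle⟩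
    have := (Set.ncard_pos (Set.toFinite _)).mpr ⟨x, hmem⟩
    omega
  | succ N ih =>
    intro x y hN hle
    rcases eq_or_lt_of_le hle with rfl | hlt
    · exact SimpleGraph.Reachable.refl x
    · have hne : (Finset.univ.filter (fun z : α => x < z ∧ z ≤ y)).Nonempty :=
        ⟨y, by simp [hlt]⟩
      obtain ⟨z, hzmem, hzmin'⟩ := Finset.exists_minimal hne
      have hzmin := fun w (hw : w ∈ Finset.univ.filter (fun z : α => x < z ∧ z ≤ y)) (hlt : w < z) =>
        hlt.not_ge (hzmin' hw hlt.le)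
      simp only [Finset.mem_filter, Finset.mem_univ, true_and] at hzmem
      obtain ⟨hxz, hzy⟩ := hzmem
      have hcov : x ⋖ z := by
        refine ⟨hxz, fun w hw1 hw2 => ?_⟩
        exact hzmin w (by
          simp only [Finset.mem_filter, Finset.mem_univ, true_and]
          exact ⟨hw1, (hw2.le).trans hzy⟩) hw2
      have hadj : (hasseGraph α).Adj x z := Or.inl hcov
      have hint : Set.ncard (Set.Icc z y) ≤ N := by
        have hsub : Set.Icc z y ⊆ Set.Icc x y := fun w hw => ⟨hxz.le.trans hw.1, hw.2⟩
        have hss : Set.Icc z y ⊂ Set.Icc x y :=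
          (Set.ssubset_iff_of_subset hsub).mpr
            ⟨x, ⟨le_rfl, hle⟩, fun hc => absurd hc.1 (not_le_of_gt hxz)⟩
        have := Set.ncard_lt_ncard hss (Set.toFinite _)
        omega
      exact (hadj.reachable).trans (ih z y hint hzy)

lemma reachable_iff_connRel (x y : α) :
    (hasseGraph α).Reachable x y ↔ connRel (fun a b : α => a ≤ b) x y := by
  constructor
  · intro h
    obtain ⟨w⟩ := h
    induction w with
    | nil => exact (Relation.EqvGen.is_equivalence _).refl _
    | cons hadj p ih =>
      refine (Relation.EqvGen.is_equivalence _).trans ?_ ih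
      rcases (show _ ⋖ _ ∨ _ ⋖ _ from hadj) with hc | hc
      · exact Relation.EqvGen.rel _ _ (Or.inl hc.le)
      · exact Relation.EqvGen.rel _ _ (Or.inr hc.le)
  · intro h
    induction h with
    | rel a b hab =>
      rcases hab with hab | hab
      · exact hasse_reachable_of_le hab
      · exact (hasse_reachable_of_le hab).symm
    | refl a => exact SimpleGraph.Reachable.refl a
    | symm a b _ ih => exact ih.symm
    | trans a b c _ _ ih1 ih2 => exact ih1.trans ih2

end Final

/-- Theorem 1. For `S = (|S|, ≼, E)` with `|S|` finite, the function
`n ↦ C(S,n)` is given by a polynomial with rational coefficients, all primes dividing the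
denominators of whose coefficients are at most `card |S| − c + 1`, where `c` is the number of
connected components of the Hasse diagram of `(|S|, ≼)`. -/
theorem orderChromaticCount_polynomial (α : Type*) [Fintype α] [PartialOrder α]
    (G : SimpleGraph α) :
    ∃ f : Polynomial ℚ,
      (∀ n : ℕ, (orderChromaticCount α G n : ℚ) = f.eval (n : ℚ)) ∧
      ∀ k p : ℕ, p.Prime → p ∣ (f.coeff k).den →
        p ≤ Fintype.card α - Nat.card (hasseGraph α).ConnectedComponent + 1 := by
  obtain ⟨f, hf, hd⟩ := main_aux
    (Set.ncard {p : α × α | G.Adj p.1 p.2 ∧ ¬ p.1 ≤ p.2 ∧ ¬ p.2 ≤ p.1})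
    (fun a b : α => a ≤ b) G.Adj (fun a => le_rfl) (fun a b c hab hbc => le_trans hab hbc)
    (fun _ _ h => G.adj_symm h) le_rfl
  refine ⟨f, fun n => ?_, fun k p hp hd' => ?_⟩
  · rw [← hf n]
    congr 1
  · have hqq : qq (fun a b : α => a ≤ b) = Fintype.card α := by
      rw [qq, ← Nat.card_eq_fintype_card]
      refine Nat.card_congr
        { toFun := Quot.lift id (fun a b h => le_antisymm h.1 h.2)
          invFun := Quot.mk _
          left_inv := by
            intro q
            induction q using Quot.ind with
            | _ a => rfl
          right_inv := fun a => rfl }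
    have hcc : cc (fun a b : α => a ≤ b) = Nat.card (hasseGraph α).ConnectedComponent := by
      rw [cc]
      exact Nat.card_congr
        ((Quot.congrRight (fun a b => (reachable_iff_connRel a b).symm) :
          Quot (connRel (fun a b : α => a ≤ b)) ≃ Quot (hasseGraph α).Reachable))
    have := hd k p hp hd'
    rwa [hqq, hcc] at this
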